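/- Let λ > 0, let q ≥ 1, let a_1, …, a_q ∈ ℝ, and let ε_1, …, ε_q be independent real random variables each with the Gumbel(0, λ) distribution. Then for each i ∈ {1, …, q}, the probability that a_i + ε_i > a_{i'} + ε_{i'} for all i' ≠ i equals exp(a_i/λ) / Σ_{i'=1}^q exp(a_{i'}/λ). In particular, the argmax of the Gumbel-perturbed utilities follows the softmax (Logistic/multinomial logit) distribution over {1, …, q}. -/

import Mathlib

open MeasureTheory ProbabilityTheory

/-- The Gumbel(0, λ) distribution on ℝ, given by its density with respect to Lebesgue measure. -/
noncomputable def gumbel (l : ℝ) : Measure ℝ :=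
  volume.withDensity fun x => ENNReal.ofReal ((1 / l) * Real.exp (-x / l - Real.exp (-x / l)))

section Aux
open Real Filter Set Topology

lemma aux_hasDerivAt {c l : ℝ} (hc : c ≠ 0) (hl : l ≠ 0) (y : ℝ) :
    HasDerivAt (fun y => -(1/c) * Real.exp (-(c * Real.exp (y/l))))
      ((1/l) * Real.exp (y/l) * Real.exp (-(c * Real.exp (y/l)))) y := by
  have h1 : HasDerivAt (fun y : ℝ => y/l) (1/l) y := (hasDerivAt_id y).div_const l
  have h4 := (((h1.exp.const_mul c).neg).exp).const_mul (-(1/c))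
  refine h4.congr_deriv ?_
  simp only [Pi.neg_apply]
  field_simp

lemma aux_exp_tendsto {c l : ℝ} (hc : 0 < c) (hl : 0 < l) :
    Tendsto (fun y : ℝ => c * Real.exp (y/l)) atTop atTop := by
  have h1 : Tendsto (fun y : ℝ => y/l) atTop atTop := tendsto_id.atTop_div_const hl
  exact (Real.tendsto_exp_atTop.comp h1).const_mul_atTop hc

lemma aux_tendsto {c l : ℝ} (hc : 0 < c) (hl : 0 < l) :
    Tendsto (fun y => -(1/c) * Real.exp (-(c * Real.exp (y/l)))) atTop (𝓝 0) := by
  have h3 := Real.tendsto_exp_atBot.comp (tendsto_neg_atBot_iff.mpr (aux_exp_tendsto hc hl))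
  have := h3.const_mul (-(1/c))
  simpa using this

lemma aux_integrableOn {c l : ℝ} (hc : 0 < c) (hl : 0 < l) (s : ℝ) :
    IntegrableOn (fun y => (1/l) * Real.exp (y/l) * Real.exp (-(c * Real.exp (y/l)))) (Ioi s) := by
  refine integrableOn_Ioi_deriv_of_nonneg' (fun x _ => aux_hasDerivAt hc.ne' hl.ne' x)
    (fun x _ => ?_) (aux_tendsto hc hl)
  positivity

lemma aux_integral {c l : ℝ} (hc : 0 < c) (hl : 0 < l) (s : ℝ) :
    ∫ y in Ioi s, (1/l) * Real.exp (y/l) * Real.exp (-(c * Real.exp (y/l)))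
      = (1/c) * Real.exp (-(c * Real.exp (s/l))) := by
  rw [integral_Ioi_of_hasDerivAt_of_tendsto' (fun x _ => aux_hasDerivAt hc.ne' hl.ne' x)
    (aux_integrableOn hc hl s) (aux_tendsto hc hl)]
  ring

lemma aux_lintegral_Ioi {c l : ℝ} (hc : 0 < c) (hl : 0 < l) (s : ℝ) :
    ∫⁻ y in Ioi s, ENNReal.ofReal ((1/l) * Real.exp (y/l) * Real.exp (-(c * Real.exp (y/l))))
      = ENNReal.ofReal ((1/c) * Real.exp (-(c * Real.exp (s/l)))) := by
  rw [← ofReal_integral_eq_lintegral_ofReal (aux_integrableOn hc hl s)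
    (Filter.Eventually.of_forall fun x => by positivity), aux_integral hc hl s]

lemma aux_lintegral_univ {c l : ℝ} (hc : 0 < c) (hl : 0 < l) :
    ∫⁻ y, ENNReal.ofReal ((1/l) * Real.exp (y/l) * Real.exp (-(c * Real.exp (y/l)))) ∂volume
      = ENNReal.ofReal (1/c) := by
  set μ := volume.withDensity
    (fun y => ENNReal.ofReal ((1/l) * Real.exp (y/l) * Real.exp (-(c * Real.exp (y/l))))) with hμ
  have happ : ∀ s : Set ℝ, MeasurableSet s → μ s
      = ∫⁻ y in s, ENNReal.ofReal ((1/l) * Real.exp (y/l) * Real.exp (-(c * Real.exp (y/l)))) :=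
    fun s hs => withDensity_apply _ hs
  have hU : ⋃ n : ℕ, Ioi (-(n:ℝ)) = univ := by
    ext x
    simp only [mem_iUnion, mem_Ioi, mem_univ, iff_true]
    obtain ⟨n, hn⟩ := exists_nat_gt (-x)
    exact ⟨n, by linarith⟩
  have hmono : Monotone (fun n : ℕ => Ioi (-(n:ℝ))) := fun m n hmn =>
    Ioi_subset_Ioi (by exact_mod_cast neg_le_neg (Nat.cast_le.mpr hmn))
  have h1 := tendsto_measure_iUnion_atTop (μ := μ) hmono
  rw [hU] at h1
  have h2 : Tendsto (fun n : ℕ => μ (Ioi (-(n:ℝ)))) atTop (𝓝 (ENNReal.ofReal (1/c))) := by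
    have hreal : Tendsto (fun n : ℕ => (1/c) * Real.exp (-(c * Real.exp (-(n:ℝ)/l)))) atTop
        (𝓝 (1/c)) := by
      have ha : Tendsto (fun n : ℕ => -(n:ℝ)/l) atTop atBot := by
        apply Tendsto.atBot_div_const hl
        exact tendsto_neg_atBot_iff.mpr tendsto_natCast_atTop_atTop
      have hb := Real.tendsto_exp_atBot.comp ha
      have hcℝ : Tendsto (fun n : ℕ => -(c * Real.exp (-(n:ℝ)/l))) atTop (𝓝 0) := by
        have := (hb.const_mul c).neg
        simpa using this
      have hd := (Real.continuous_exp.tendsto 0).comp hcℝ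
      have := hd.const_mul (1/c)
      simpa using this
    have := ENNReal.tendsto_ofReal hreal
    convert this using 2 with n
    rw [happ _ measurableSet_Ioi, aux_lintegral_Ioi hc hl]
  have := tendsto_nhds_unique h1 h2
  rw [← setLIntegral_univ, ← happ _ MeasurableSet.univ, this]

lemma aux_meas (c l : ℝ) : Measurable (fun x : ℝ =>
    ENNReal.ofReal ((1/l) * Real.exp (-x/l) * Real.exp (-(c * Real.exp (-x/l))))) := by
  fun_prop

lemma aux_lintegral_fE_Iio {c l : ℝ} (hc : 0 < c) (hl : 0 < l) (t : ℝ) :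
    ∫⁻ x in Iio t, ENNReal.ofReal ((1/l) * Real.exp (-x/l) * Real.exp (-(c * Real.exp (-x/l))))
      = ENNReal.ofReal ((1/c) * Real.exp (-(c * Real.exp (-t/l)))) := by
  have hres : volume.restrict (Iio t) = Measure.map Neg.neg (volume.restrict (Ioi (-t))) := by
    have : Ioi (-t) = Neg.neg ⁻¹' (Iio t) := by ext x; simp [neg_lt]
    rw [this, ← measurableEmbedding_neg.restrict_map, Measure.map_neg_eq_self]
  rw [hres, lintegral_map (aux_meas c l) measurable_neg]
  simp only [neg_neg]
  exact aux_lintegral_Ioi hc hl (-t)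

lemma aux_lintegral_fE_univ {c l : ℝ} (hc : 0 < c) (hl : 0 < l) :
    ∫⁻ x, ENNReal.ofReal ((1/l) * Real.exp (-x/l) * Real.exp (-(c * Real.exp (-x/l)))) ∂volume
      = ENNReal.ofReal (1/c) := by
  rw [← Measure.map_neg_eq_self (volume : Measure ℝ), lintegral_map (aux_meas c l) measurable_neg]
  simp only [neg_neg]
  exact aux_lintegral_univ hc hl

lemma gumbel_Iio {l : ℝ} (hl : 0 < l) (t : ℝ) :
    gumbel l (Iio t) = ENNReal.ofReal (Real.exp (-Real.exp (-t/l))) := by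
  rw [gumbel, withDensity_apply _ measurableSet_Iio]
  have : ∀ x : ℝ, (1/l) * Real.exp (-x/l - Real.exp (-x/l))
      = (1/l) * Real.exp (-x/l) * Real.exp (-(1 * Real.exp (-x/l))) := by
    intro x
    rw [sub_eq_add_neg, Real.exp_add, one_mul]
    ring
  simp_rw [this]
  rw [aux_lintegral_fE_Iio one_pos hl t]
  norm_num

lemma joint_map {Ω : Type*} [MeasurableSpace Ω] {P : Measure Ω} [IsProbabilityMeasure P]
    {m : ℕ} {ν : Measure ℝ} [IsProbabilityMeasure ν] (ε : Fin m → Ω → ℝ)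
    (hmeas : ∀ i, Measurable (ε i))
    (hindep : iIndepFun ε P)
    (hdist : ∀ i, Measure.map (ε i) P = ν) :
    Measure.map (fun ω j => ε j ω) P = Measure.pi (fun _ => ν) := by
  refine (Measure.pi_eq fun s hs => ?_).symm
  rw [Measure.map_apply (measurable_pi_lambda _ hmeas) (MeasurableSet.univ_pi hs)]
  have h1 : (fun ω j => ε j ω) ⁻¹' (Set.pi Set.univ s) = ⋂ j, ε j ⁻¹' s j := by
    ext ω; simp [Set.mem_univ_pi]
  rw [h1, hindep.meas_iInter (fun j => ⟨s j, hs j, rfl⟩)]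
  refine Finset.prod_congr rfl fun j _ => ?_
  rw [← hdist j, Measure.map_apply (hmeas j) (hs j)]

lemma ofReal_prod' {ι : Type*} (s : Finset ι) (f : ι → ℝ) (hf : ∀ j ∈ s, 0 ≤ f j) :
    ∏ j ∈ s, ENNReal.ofReal (f j) = ENNReal.ofReal (∏ j ∈ s, f j) := by
  induction s using Finset.cons_induction with
  | empty => simp
  | cons j s hj ih =>
    rw [Finset.prod_cons, Finset.prod_cons, ih (fun k hk => hf k (Finset.mem_cons_of_mem hk)),
      ENNReal.ofReal_mul (hf j (Finset.mem_cons_self j s))]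

end Aux

open Real Filter Set Topology in
theorem gumbel_argmax_softmax
    {Ω : Type*} [MeasurableSpace Ω] (P : Measure Ω) [IsProbabilityMeasure P]
    (l : ℝ) (hl : 0 < l) (q : ℕ) (hq : 1 ≤ q) (a : Fin q → ℝ)
    (ε : Fin q → Ω → ℝ) (hmeas : ∀ i, Measurable (ε i))
    (hindep : iIndepFun ε P)
    (hdist : ∀ i, Measure.map (ε i) P = gumbel l) (i : Fin q) :
    P {ω | ∀ i', i' ≠ i → a i' + ε i' ω < a i + ε i ω}
      = ENNReal.ofReal (Real.exp (a i / l) / ∑ i', Real.exp (a i' / l)) := by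
  haveI hPg : IsProbabilityMeasure (gumbel l) := by
    rw [← hdist i]; exact Measure.isProbabilityMeasure_map (hmeas i).aemeasurable
  obtain ⟨n, rfl⟩ : ∃ n, q = n + 1 := ⟨q - 1, (Nat.succ_pred_eq_of_pos hq).symm⟩
  set c : ℝ := ∑ i', Real.exp ((a i' - a i)/l) with hcdef
  have hc : 0 < c := Finset.sum_pos (fun j _ => exp_pos _) ⟨i, Finset.mem_univ i⟩
  set S : Set (Fin (n+1) → ℝ) := {x | ∀ i', i' ≠ i → a i' + x i' < a i + x i} with hSdef
  have hS : MeasurableSet S := by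
    have : S = ⋂ i', ⋂ (_ : i' ≠ i), {x : Fin (n+1) → ℝ | a i' + x i' < a i + x i} := by
      ext x; simp [hSdef]
    rw [this]
    exact MeasurableSet.iInter fun i' => MeasurableSet.iInter fun _ =>
      measurableSet_lt (by fun_prop) (by fun_prop)
  have hev : P {ω | ∀ i', i' ≠ i → a i' + ε i' ω < a i + ε i ω}
      = Measure.pi (fun _ : Fin (n+1) => gumbel l) S := by
    rw [← joint_map ε hmeas hindep hdist,
      Measure.map_apply (measurable_pi_lambda _ hmeas) hS]
    rfl
  set T : Set (ℝ × (Fin n → ℝ)) := {p | ∀ j, a (i.succAbove j) + p.2 j < a i + p.1} with hTdef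
  have hT : MeasurableSet T := by
    have : T = ⋂ j, {p : ℝ × (Fin n → ℝ) | a (i.succAbove j) + p.2 j < a i + p.1} := by
      ext p; simp [hTdef]
    rw [this]
    exact MeasurableSet.iInter fun j => measurableSet_lt (by fun_prop) (by fun_prop)
  have hpre : (MeasurableEquiv.piFinSuccAbove (fun _ : Fin (n+1) => ℝ) i) ⁻¹' T = S := by
    ext x
    simp only [hTdef, hSdef, mem_preimage, MeasurableEquiv.piFinSuccAbove_apply,
      Fin.insertNthEquiv, Equiv.coe_fn_symm_mk, mem_setOf_eq]
    constructor
    · intro h i' hi'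
      obtain ⟨j, rfl⟩ := Fin.exists_succAbove_eq hi'
      exact h j
    · intro h j
      exact h _ (Fin.succAbove_ne i j)
  have hprod : Measure.pi (fun _ : Fin (n+1) => gumbel l) S
      = ((gumbel l).prod (Measure.pi fun _ : Fin n => gumbel l)) T := by
    rw [← (measurePreserving_piFinSuccAbove (fun _ : Fin (n+1) => gumbel l) i).map_eq,
      Measure.map_apply (MeasurableEquiv.piFinSuccAbove (fun _ : Fin (n+1) => ℝ) i).measurable hT,
      hpre]
  have hslice : ∀ t : ℝ, (Measure.pi fun _ : Fin n => gumbel l) (Prod.mk t ⁻¹' T)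
      = ∏ j, ENNReal.ofReal (Real.exp (-Real.exp (-(a i + t - a (i.succAbove j))/l))) := by
    intro t
    have : Prod.mk t ⁻¹' T = Set.pi univ (fun j => Iio (a i + t - a (i.succAbove j))) := by
      ext y; simp [hTdef, lt_sub_iff_add_lt']
    rw [this, Measure.pi_pi]
    exact Finset.prod_congr rfl fun j _ => gumbel_Iio hl _
  rw [hev, hprod, Measure.prod_apply hT]
  simp_rw [hslice]
  rw [gumbel, lintegral_withDensity_eq_lintegral_mul volume (by fun_prop)
    (by fun_prop : Measurable fun t : ℝ => ∏ j, ENNReal.ofReal (Real.exp (-Real.exp (-(a i + t - a (i.succAbove j))/l))))]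
  have hpt : ∀ t : ℝ,
      (ENNReal.ofReal ((1 / l) * Real.exp (-t / l - Real.exp (-t / l)))
        * ∏ j, ENNReal.ofReal (Real.exp (-Real.exp (-(a i + t - a (i.succAbove j))/l))))
      = ENNReal.ofReal ((1/l) * Real.exp (-t/l) * Real.exp (-(c * Real.exp (-t/l)))) := by
    intro t
    rw [ofReal_prod' _ _ (fun j _ => (exp_pos _).le), ← ENNReal.ofReal_mul (by positivity)]
    congr 1
    rw [← Real.exp_sum]
    have h1 : ∑ j, -Real.exp (-(a i + t - a (i.succAbove j))/l)
        = -((c - 1) * Real.exp (-t/l)) := by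
      have h2 : ∀ j : Fin n, -(a i + t - a (i.succAbove j))/l
          = (a (i.succAbove j) - a i)/l + (-t/l) := by intro j; ring
      have h3 : (∑ j, Real.exp (-(a i + t - a (i.succAbove j))/l))
          = (c - 1) * Real.exp (-t/l) := by
        simp_rw [h2, Real.exp_add, ← Finset.sum_mul]
        congr 2
        rw [hcdef, Fin.sum_univ_succAbove (fun i' => Real.exp ((a i' - a i)/l)) i]
        simp
      rw [Finset.sum_neg_distrib, h3]
    rw [h1]
    have h4 : (-t/l - Real.exp (-t/l)) + (-((c-1) * Real.exp (-t/l)))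
        = (-t/l) + (-(c * Real.exp (-t/l))) := by ring
    rw [mul_assoc, ← Real.exp_add, mul_assoc, ← Real.exp_add, h4]
  simp_rw [Pi.mul_apply, hpt]
  rw [aux_lintegral_fE_univ hc hl]
  congr 1
  have hexp : ∀ i' : Fin (n+1), Real.exp (a i' / l)
      = Real.exp ((a i' - a i)/l) * Real.exp (a i / l) := by
    intro i'
    rw [← Real.exp_add]
    congr 1
    field_simp
    ring
  have hsum : (∑ i', Real.exp (a i' / l)) = c * Real.exp (a i / l) := by
    rw [hcdef, Finset.sum_mul]
    exact Finset.sum_congr rfl fun i' _ => hexp i'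
  rw [hsum]
  rw [mul_comm, ← div_div, div_self (exp_pos _).ne']
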